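/- Let Γ(R) be the zero-divisor graph of R = 𝔽_p[x]/(x^{2b}) with b ≥ 1. The set L of nonzero zero-divisors whose minimal degree is at most b−1 is an independent set of size p^{2b−1} − p^b. -/

import Mathlib

open Polynomial

noncomputable section

/-- The truncated polynomial ring `𝔽_p[x]/(x^c)`. -/
abbrev TPR (p c : ℕ) : Type := AdjoinRoot (X ^ c : (ZMod p)[X])

instance (p c : ℕ) [Fact p.Prime] : Finite (TPR p c) := by
  have hb : PowerBasis (ZMod p) (TPR p c) :=
    AdjoinRoot.powerBasis (pow_ne_zero c Polynomial.X_ne_zero)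
  have : Module.Finite (ZMod p) (TPR p c) := Module.Finite.of_basis hb.basis
  exact Module.finite_of_finite (ZMod p)

/-- The canonical representative (the unique representative of degree `< c`)
of an element of `𝔽_p[x]/(x^c)`. -/
def canon {p c : ℕ} (f : TPR p c) : (ZMod p)[X] :=
  Function.surjInv (AdjoinRoot.mk_surjective (g := (X ^ c : (ZMod p)[X]))) f %ₘ X ^ c

lemma mk_canon {p c : ℕ} [Fact p.Prime] (f : TPR p c) :
    AdjoinRoot.mk (X ^ c : (ZMod p)[X]) (canon f) = f := by
  unfold canon
  rw [Polynomial.modByMonic_eq_sub_mul_div _ (X ^ c : (ZMod p)[X]), map_sub, map_mul,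
    AdjoinRoot.mk_self, zero_mul, sub_zero]
  exact Function.surjInv_eq _ f

lemma degree_canon {p c : ℕ} [Fact p.Prime] (f : TPR p c) : (canon f).degree < c := by
  have : (1 : ZMod p) ≠ 0 := one_ne_zero
  have h := Polynomial.degree_modByMonic_lt
    (Function.surjInv (AdjoinRoot.mk_surjective (g := (X ^ c : (ZMod p)[X]))) f)
    (monic_X_pow c (R := ZMod p))
  rwa [degree_X_pow] at h

lemma canon_mk {p c : ℕ} [Fact p.Prime] {g : (ZMod p)[X]} (hg : g.degree < c) :
    canon (AdjoinRoot.mk (X ^ c : (ZMod p)[X]) g) = g := by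
  have h1 := mk_canon (AdjoinRoot.mk (X ^ c : (ZMod p)[X]) g)
  rw [AdjoinRoot.mk_eq_mk] at h1
  have hd : (canon (AdjoinRoot.mk (X ^ c : (ZMod p)[X]) g) - g).degree < c :=
    lt_of_le_of_lt (degree_sub_le _ _) (max_lt (degree_canon _) hg)
  by_contra hne
  have hne' : canon (AdjoinRoot.mk (X ^ c : (ZMod p)[X]) g) - g ≠ 0 := sub_ne_zero.mpr hne
  have := Polynomial.degree_le_of_dvd h1 hne'
  rw [degree_X_pow] at this
  exact absurd (lt_of_le_of_lt this hd) (lt_irrefl _)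

lemma mk_ne_zero_of_degree_lt {p c : ℕ} [Fact p.Prime] {g : (ZMod p)[X]} (hg : g.degree < c)
    (hg0 : g ≠ 0) : AdjoinRoot.mk (X ^ c : (ZMod p)[X]) g ≠ 0 := by
  rw [Ne, AdjoinRoot.mk_eq_zero]
  intro hdvd
  have := Polynomial.degree_le_of_dvd hdvd hg0
  rw [degree_X_pow] at this
  exact absurd (lt_of_le_of_lt this hg) (lt_irrefl _)

lemma canon_ne_zero {p c : ℕ} [Fact p.Prime] {f : TPR p c} (hf : f ≠ 0) : canon f ≠ 0 := by
  intro h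
  apply hf
  rw [← mk_canon f, h, map_zero]

def zeroLowEquiv (R : Type*) [Zero R] (n m : ℕ) (h : m ≤ n) :
    {v : Fin n → R // ∀ i : Fin n, i.val < m → v i = 0} ≃ (Fin (n - m) → R) where
  toFun v j := v.1 ⟨m + j.1, by omega⟩
  invFun w := ⟨fun i => if h2 : m ≤ i.1 then w ⟨i.1 - m, by omega⟩ else 0,
    fun i hi => dif_neg (by omega)⟩
  left_inv v := Subtype.ext (funext fun i => by
    by_cases h2 : m ≤ i.1
    · simp only [dif_pos h2]
      exact congrArg v.1 (Fin.ext (show m + (i.1 - m) = i.1 by omega))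
    · simp only [dif_neg h2]
      exact (v.2 i (by omega)).symm)
  right_inv w := funext fun j => by
    simp only [dif_pos (Nat.le_add_right m j.1)]
    exact congrArg w (Fin.ext (show m + j.1 - m = j.1 by omega))

lemma card_zeroLow (p : ℕ) [Fact p.Prime] (n m : ℕ) (h : m ≤ n) :
    Set.ncard {v : Fin n → ZMod p | ∀ i : Fin n, i.val < m → v i = 0} = p ^ (n - m) := by
  rw [← Nat.card_coe_set_eq]
  have : Nat.card {v : Fin n → ZMod p | ∀ i : Fin n, i.val < m → v i = 0}
      = Nat.card (Fin (n - m) → ZMod p) := Nat.card_congr (zeroLowEquiv (ZMod p) n m h)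
  rw [this, Nat.card_eq_fintype_card, Fintype.card_fun, ZMod.card, Fintype.card_fin]

/-- The minimal degree: the least exponent with nonzero coefficient in the
canonical representative. -/
def mindeg {p c : ℕ} (f : TPR p c) : ℕ := (canon f).natTrailingDegree

/-- The set of nonzero zero-divisors of `𝔽_p[x]/(x^c)`. -/
def zd (p c : ℕ) : Set (TPR p c) := {f | f ≠ 0 ∧ ∃ g, g ≠ 0 ∧ f * g = 0}

/-- The zero-divisor graph of `𝔽_p[x]/(x^c)`: vertices are the nonzero
zero-divisors, and `f ~ g` iff `f ≠ g` and `f * g = 0`. -/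
def zdGraph (p c : ℕ) : SimpleGraph (zd p c) where
  Adj a b := a ≠ b ∧ (a : TPR p c) * (b : TPR p c) = 0
  symm := ⟨fun a b h => ⟨h.1.symm, by rw [mul_comm]; exact h.2⟩⟩
  loopless := ⟨fun a h => h.1 rfl⟩

/-- In `Γ(𝔽_p[x]/(x^(2b)))`, the set of vertices with `1 ≤ mindeg ≤ b - 1` is an
independent set of size `p^(2b-1) - p^b`. -/
theorem stmt_5 (p b : ℕ) [Fact p.Prime] (hb : 1 ≤ b)
    (L : Set (zd p (2 * b)))
    (hL : L = {v | 1 ≤ mindeg (v : TPR p (2 * b)) ∧ mindeg (v : TPR p (2 * b)) ≤ b - 1}) :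
    (∀ u ∈ L, ∀ v ∈ L, ¬ (zdGraph p (2 * b)).Adj u v) ∧
      L.ncard = p ^ (2 * b - 1) - p ^ b := by
  have hL' : L = {v : ↥(zd p (2 * b)) |
      1 ≤ mindeg (v : TPR p (2 * b)) ∧ mindeg (v : TPR p (2 * b)) ≤ b - 1} := by
    ext v
    constructor
    · intro hv
      have h1 : (v : TPR p (2 * b)) ∈ Subtype.val '' L := Set.mem_image_of_mem _ hv
      rw [hL] at h1
      exact h1
    · intro hv
      have h1 : (v : TPR p (2 * b)) ∈ Subtype.val '' L := by rw [hL]; exact hv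
      obtain ⟨u, hu, he⟩ := h1
      rwa [show u = v from Subtype.val_injective he] at hu
  subst hL'
  constructor
  · -- independence
    rintro u ⟨hu1, hu2⟩ v ⟨hv1, hv2⟩ (⟨hne, hmul⟩ : u ≠ v ∧ (u : TPR p (2 * b)) * (v : TPR p (2 * b)) = 0)
    have hau0 : canon (u : TPR p (2 * b)) ≠ 0 := canon_ne_zero u.2.1
    have hav0 : canon (v : TPR p (2 * b)) ≠ 0 := canon_ne_zero v.2.1
    have hmk : AdjoinRoot.mk (X ^ (2 * b) : (ZMod p)[X])
        (canon (u : TPR p (2 * b)) * canon (v : TPR p (2 * b))) = 0 := by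
      rw [map_mul, mk_canon, mk_canon]; exact hmul
    rw [AdjoinRoot.mk_eq_zero, Polynomial.X_pow_dvd_iff] at hmk
    have hprod0 : canon (u : TPR p (2 * b)) * canon (v : TPR p (2 * b)) ≠ 0 :=
      mul_ne_zero hau0 hav0
    have hntd := Polynomial.natTrailingDegree_mul hau0 hav0
    have hco : (canon (u : TPR p (2 * b)) * canon (v : TPR p (2 * b))).coeff
        ((canon (u : TPR p (2 * b)) * canon (v : TPR p (2 * b))).natTrailingDegree) ≠ 0 :=
      Polynomial.trailingCoeff_nonzero_iff_nonzero.mpr hprod0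
    apply hco
    apply hmk
    have h1 : (canon (u : TPR p (2 * b))).natTrailingDegree ≤ b - 1 := hu2
    have h2 : (canon (v : TPR p (2 * b))).natTrailingDegree ≤ b - 1 := hv2
    omega
  · -- cardinality
    set c := 2 * b with hc
    set S1 : Set (Fin c → ZMod p) := {v | ∀ i : Fin c, i.val < 1 → v i = 0} with hS1
    set S2 : Set (Fin c → ZMod p) := {v | ∀ i : Fin c, i.val < b → v i = 0} with hS2
    have key : Set.ncard {v : zd p c | 1 ≤ mindeg (v : TPR p c) ∧ mindeg (v : TPR p c) ≤ b - 1}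
        = Nat.card (S1 \ S2 : Set (Fin c → ZMod p)) := by
      rw [← Nat.card_coe_set_eq]
      apply Nat.card_congr
      refine Equiv.ofBijective
        (fun u => ⟨fun i => (canon (u.1 : TPR p c)).coeff i.1, ?_, ?_⟩) ⟨?_, ?_⟩
      · -- in S1
        intro i hi
        exact Polynomial.coeff_eq_zero_of_lt_natTrailingDegree (lt_of_lt_of_le hi u.2.1)
      · -- not in S2
        intro hall
        have hne : canon (u.1 : TPR p c) ≠ 0 := canon_ne_zero u.1.2.1
        have hu2 := u.2.2
        simp only [mindeg] at hu2
        have hk : (canon (u.1 : TPR p c)).natTrailingDegree < c := by omega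
        have h0 := hall ⟨(canon (u.1 : TPR p c)).natTrailingDegree, hk⟩ (by simp; omega)
        exact Polynomial.trailingCoeff_nonzero_iff_nonzero.mpr hne h0
      · -- injective
        intro u v huv
        have h : canon (u.1 : TPR p c) = canon (v.1 : TPR p c) := by
          ext n
          by_cases hn : n < c
          · exact congrFun (congrArg Subtype.val huv) ⟨n, hn⟩
          · rw [Polynomial.coeff_eq_zero_of_degree_lt, Polynomial.coeff_eq_zero_of_degree_lt]
            · exact lt_of_lt_of_le (degree_canon _) (Nat.cast_le.mpr (by omega))
            · exact lt_of_lt_of_le (degree_canon _) (Nat.cast_le.mpr (by omega))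
        have h2 : (u.1 : TPR p c) = (v.1 : TPR p c) := by
          rw [← mk_canon (u.1 : TPR p c), ← mk_canon (v.1 : TPR p c), h]
        exact Subtype.ext (Subtype.ext h2)
      · -- surjective
        rintro ⟨w, hw1, hw2⟩
        simp only [hS1, Set.mem_setOf_eq] at hw1
        simp only [hS2, Set.mem_setOf_eq] at hw2
        set q : (ZMod p)[X] :=
          (((degreeLTEquiv (ZMod p) c).symm w : Polynomial.degreeLT (ZMod p) c) : (ZMod p)[X])
          with hq
        have hqdeg : q.degree < c := Polynomial.mem_degreeLT.mp
          ((degreeLTEquiv (ZMod p) c).symm w).2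
        have hqco : ∀ i : Fin c, q.coeff i.1 = w i := fun i =>
          congrFun ((degreeLTEquiv (ZMod p) c).apply_symm_apply w) i
        push_neg at hw2
        obtain ⟨i0, hi0b, hi00⟩ := hw2
        have hco_i0 : q.coeff i0.1 ≠ 0 := by rw [hqco i0]; exact hi00
        have hq0 : q ≠ 0 := fun h => hco_i0 (by rw [h, Polynomial.coeff_zero])
        have h0c : (0 : ℕ) < c := by omega
        have hqc0 : q.coeff 0 = 0 := by
          have h := hqco ⟨0, h0c⟩
          rw [h]
          exact hw1 ⟨0, h0c⟩ (by simp)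
        have hntd1 : 1 ≤ q.natTrailingDegree :=
          Polynomial.le_natTrailingDegree hq0 (fun m hm => by interval_cases m; exact hqc0)
        have hntd2 : q.natTrailingDegree ≤ b - 1 := by
          have h := Polynomial.natTrailingDegree_le_of_ne_zero hco_i0
          have h2 : i0.1 < b := hi0b
          omega
        have hfzd : AdjoinRoot.mk (X ^ c : (ZMod p)[X]) q ∈ zd p c := by
          refine ⟨mk_ne_zero_of_degree_lt hqdeg hq0,
            AdjoinRoot.mk _ (X ^ (c - 1)), ?_, ?_⟩
          · refine mk_ne_zero_of_degree_lt ?_ (pow_ne_zero _ X_ne_zero)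
            rw [degree_X_pow]
            exact_mod_cast (show c - 1 < c by omega)
          · rw [← map_mul, AdjoinRoot.mk_eq_zero]
            obtain ⟨h, hXq⟩ := (Polynomial.X_dvd_iff).mpr hqc0
            have hpow : (X : (ZMod p)[X]) ^ c = X * X ^ (c - 1) := by
              rw [← pow_succ']
              congr 1
              omega
            exact ⟨h, by rw [hXq, hpow]; ring⟩
        refine ⟨⟨⟨AdjoinRoot.mk _ q, hfzd⟩, ?_⟩, ?_⟩
        · constructor
          · show 1 ≤ mindeg _
            simpa only [mindeg, canon_mk hqdeg] using hntd1
          · show mindeg _ ≤ b - 1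
            simpa only [mindeg, canon_mk hqdeg] using hntd2
        · apply Subtype.ext
          funext i
          show (canon (AdjoinRoot.mk (X ^ c : (ZMod p)[X]) q)).coeff i.1 = w i
          rw [canon_mk hqdeg]
          exact hqco i
    rw [key, Nat.card_coe_set_eq]
    have hsub : S2 ⊆ S1 := fun v hv i hi => hv i (by omega)
    rw [Set.ncard_diff hsub (Set.toFinite _), hS1, hS2,
      card_zeroLow p c 1 (by omega), card_zeroLow p c b (by omega)]
    have h1 : c - b = b := by omega
    have h2 : c - 1 = 2 * b - 1 := by omega
    rw [h1, h2]
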